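/- arXiv:2002.08514 — 3 statements merged into one kernel-verified Lean document; each statement's English description precedes it below -/
import Mathlib

section
/- Let M be a time-homogeneous Markov chain on a finite state space 𝕄 with a unique recurrent communicating class, and let R : 𝕄 × 𝕄 → ℝ₊ be a reward function. Then there exists a nonnegative function H : 𝕄 → ℝ₊ such that for every state m, E[R(M_{k+1}, M_k) | M_k = m] = E[H(M_{k+1}) − H(M_k) | M_k = m] + r_avg, where r_avg = Σ_{m ∈ 𝕄} E[R(M_{k+1}, M_k) | M_k = m] ϱ(m) and ϱ is the stationary distribution of M. -/
open Matrix Finset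

private lemma mypow_nonneg {M : Type*} [Fintype M] [DecidableEq M] (P : Matrix M M ℝ)
    (hP0 : ∀ m m', 0 ≤ P m m') : ∀ (k : ℕ) m m', 0 ≤ (P ^ k) m m' := by
  intro k
  induction k with
  | zero =>
      intro m m'
      rw [pow_zero, Matrix.one_apply]
      split <;> norm_num
  | succ k ih =>
      intro m m'
      rw [pow_succ, Matrix.mul_apply]
      exact Finset.sum_nonneg fun j _ => mul_nonneg (ih m j) (hP0 j m')

private lemma mypow_rowsum {M : Type*} [Fintype M] [DecidableEq M] (P : Matrix M M ℝ)
    (hP1 : ∀ m, ∑ m', P m m' = 1) : ∀ (k : ℕ) m, ∑ m', (P ^ k) m m' = 1 := by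
  intro k
  induction k with
  | zero => intro m; simp [Matrix.one_apply]
  | succ k ih =>
      intro m
      simp only [pow_succ, Matrix.mul_apply]
      calc ∑ m', ∑ j, (P ^ k) m j * P j m'
          = ∑ j, ∑ m', (P ^ k) m j * P j m' := Finset.sum_comm
        _ = ∑ j, (P ^ k) m j * ∑ m', P j m' := by simp [Finset.mul_sum]
        _ = 1 := by simp [hP1, ih]

private lemma harm_le {M : Type*} [Fintype M] [DecidableEq M] (P : Matrix M M ℝ)
    (hP0 : ∀ m m', 0 ≤ P m m') (hP1 : ∀ m, ∑ m', P m m' = 1)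
    (nstar : M) (hU : ∀ m : M, ∃ k : ℕ, 0 < (P ^ k) m nstar)
    (h : M → ℝ) (hh : P.mulVec h = h) : ∀ m, h m ≤ h nstar := by
  have hpow : ∀ k : ℕ, (P ^ k).mulVec h = h := by
    intro k
    induction k with
    | zero => simp
    | succ k ih => rw [pow_succ, ← Matrix.mulVec_mulVec, hh, ih]
  obtain ⟨m0, -, hm0⟩ := Finset.exists_max_image Finset.univ h ⟨nstar, Finset.mem_univ _⟩
  obtain ⟨k, hk⟩ := hU m0
  have hval : ∑ m', (P ^ k) m0 m' * h m' = h m0 := by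
    have := congrFun (hpow k) m0
    simpa [Matrix.mulVec, dotProduct] using this
  have hsum : ∑ m', (P ^ k) m0 m' * (h m0 - h m') = 0 := by
    simp only [mul_sub, Finset.sum_sub_distrib, hval, ← Finset.sum_mul,
      mypow_rowsum P hP1 k m0, one_mul, sub_self]
  have hterm : ∀ m' ∈ Finset.univ, (P ^ k) m0 m' * (h m0 - h m') = 0 := by
    rw [← Finset.sum_eq_zero_iff_of_nonneg]
    · exact hsum
    · intro i _
      exact mul_nonneg (mypow_nonneg P hP0 k m0 i) (by linarith [hm0 i (Finset.mem_univ i)])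
  have := hterm nstar (Finset.mem_univ _)
  have hns : h nstar = h m0 := by
    rcases mul_eq_zero.mp this with hc | hc
    · exact absurd hc (ne_of_gt hk)
    · linarith
  intro m
  rw [hns]
  exact hm0 m (Finset.mem_univ m)

/-- **Potential-like function for a finite Markov chain.**
`P` is a row-stochastic transition matrix on the finite state space `M` with a
unique recurrent communicating class (encoded by the existence of a state `nstar`
reachable from every state), `ϱ` is its stationary PMF, and `R` is a nonnegative
reward.  Then there is a nonnegative potential-like function `H` satisfying the
Poisson-equation-type identity
`E[R(M_{k+1},M_k) | M_k = m] = E[H(M_{k+1}) - H(M_k) | M_k = m] + r_avg`. -/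
theorem stmt0 {M : Type*} [Fintype M] [DecidableEq M]
    (P : Matrix M M ℝ)
    (hP0 : ∀ m m', 0 ≤ P m m') (hP1 : ∀ m, ∑ m', P m m' = 1)
    (hUniqueRec : ∃ nstar : M, ∀ m : M, ∃ k : ℕ, 0 < (P ^ k) m nstar)
    (ϱ : M → ℝ) (hϱ0 : ∀ m, 0 ≤ ϱ m) (hϱ1 : ∑ m, ϱ m = 1)
    (hstat : ∀ m', ∑ m, ϱ m * P m m' = ϱ m')
    (R : M → M → ℝ) (hR : ∀ m m', 0 ≤ R m m') :
    ∃ H : M → ℝ, (∀ m, 0 ≤ H m) ∧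
      ∀ m : M,
        ∑ m', P m m' * R m' m
          = (∑ m', P m m' * (H m' - H m))
            + ∑ m'', (∑ m', P m'' m' * R m' m'') * ϱ m'' := by
  obtain ⟨nstar, hU⟩ := hUniqueRec
  have : Nonempty M := ⟨nstar⟩
  set A : Matrix M M ℝ := 1 - P with hA
  -- the expected reward and its average
  set f : M → ℝ := fun m => ∑ m', P m m' * R m' m with hf
  set r : ℝ := ∑ m'', f m'' * ϱ m'' with hr
  set g : M → ℝ := fun m => r - f m with hg
  -- the stationary functional
  set L : (M → ℝ) →ₗ[ℝ] ℝ :=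
    { toFun := fun v => ∑ m, ϱ m * v m
      map_add' := fun x y => by simp [mul_add, Finset.sum_add_distrib]
      map_smul' := fun c x => by
        simp only [Pi.smul_apply, smul_eq_mul, RingHom.id_apply, Finset.mul_sum]
        exact Finset.sum_congr rfl fun i _ => by ring } with hL
  -- kernel of A is the constants
  have hAone : A.mulVecLin (fun _ => (1:ℝ)) = 0 := by
    funext m
    simp only [Matrix.mulVecLin_apply, hA, Matrix.sub_mulVec, Matrix.one_mulVec,
      Pi.sub_apply, Pi.zero_apply, Matrix.mulVec, dotProduct]
    simp [Matrix.one_apply, hP1 m]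
  have hker : LinearMap.ker A.mulVecLin = Submodule.span ℝ {(fun _ => (1:ℝ) : M → ℝ)} := by
    apply le_antisymm
    · intro h hh
      rw [LinearMap.mem_ker, Matrix.mulVecLin_apply] at hh
      have hharm : P.mulVec h = h := by
        have : h - P.mulVec h = 0 := by
          rw [← hh, hA, Matrix.sub_mulVec, Matrix.one_mulVec]
        have := sub_eq_zero.mp this
        exact this.symm
      have hneg : P.mulVec (-h) = -h := by
        rw [Matrix.mulVec_neg, hharm]
      have heq : ∀ m, h m = h nstar := by
        intro m
        have h1 := harm_le P hP0 hP1 nstar hU h hharm m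
        have h2 := harm_le P hP0 hP1 nstar hU (-h) hneg m
        simp only [Pi.neg_apply] at h2
        linarith
      rw [Submodule.mem_span_singleton]
      exact ⟨h nstar, funext fun m => by simp [heq m]⟩
    · rw [Submodule.span_le, Set.singleton_subset_iff]
      exact hAone
  have hone_ne : (fun _ => (1:ℝ) : M → ℝ) ≠ 0 := by
    intro hc
    have := congrFun hc nstar
    norm_num at this
  have hkerdim : Module.finrank ℝ (LinearMap.ker A.mulVecLin) = 1 := by
    rw [hker]
    exact finrank_span_singleton hone_ne
  -- L is surjective
  have hLsurj : LinearMap.range L = ⊤ := by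
    rw [LinearMap.range_eq_top]
    intro c
    refine ⟨fun _ => c, ?_⟩
    show ∑ m, ϱ m * c = c
    rw [← Finset.sum_mul, hϱ1, one_mul]
  -- range A ≤ ker L
  have hrange_le : LinearMap.range A.mulVecLin ≤ LinearMap.ker L := by
    rintro v ⟨h, rfl⟩
    rw [LinearMap.mem_ker]
    show ∑ m, ϱ m * (A.mulVecLin h) m = 0
    have key : ∑ m, ϱ m * (P.mulVec h) m = ∑ m, ϱ m * h m := by
      simp only [Matrix.mulVec, dotProduct]
      calc ∑ m, ϱ m * ∑ m', P m m' * h m'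
          = ∑ m, ∑ m', ϱ m * P m m' * h m' := by
            simp [Finset.mul_sum, mul_assoc]
        _ = ∑ m', ∑ m, ϱ m * P m m' * h m' := Finset.sum_comm
        _ = ∑ m', (∑ m, ϱ m * P m m') * h m' := by simp [Finset.sum_mul]
        _ = ∑ m', ϱ m' * h m' := by simp [hstat]
    simp only [Matrix.mulVecLin_apply, hA, Matrix.sub_mulVec, Matrix.one_mulVec, Pi.sub_apply,
      mul_sub, Finset.sum_sub_distrib, key, sub_self]
  -- dimension count
  have hMdim : Module.finrank ℝ (M → ℝ) = Fintype.card M := Module.finrank_fintype_fun_eq_card ℝ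
  have h1 := LinearMap.finrank_range_add_finrank_ker A.mulVecLin
  have h2 := LinearMap.finrank_range_add_finrank_ker L
  rw [hMdim, hkerdim] at h1
  rw [hMdim, hLsurj, finrank_top, Module.finrank_self] at h2
  have hrange_eq : LinearMap.range A.mulVecLin = LinearMap.ker L :=
    Submodule.eq_of_le_of_finrank_eq hrange_le (by omega)
  -- g is in the kernel of L
  have hgL : g ∈ LinearMap.ker L := by
    rw [LinearMap.mem_ker]
    show ∑ m, ϱ m * g m = 0
    simp only [hg, mul_sub, Finset.sum_sub_distrib, ← Finset.sum_mul, hϱ1, one_mul]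
    rw [hr]
    rw [Finset.sum_congr rfl fun i _ => mul_comm (ϱ i) (f i)]
    ring
  rw [← hrange_eq] at hgL
  obtain ⟨H₀, hH₀⟩ := hgL
  -- shift to get nonnegativity
  refine ⟨fun m => H₀ m + ∑ m', |H₀ m'|, ?_, ?_⟩
  · intro m
    have h1 : |H₀ m| ≤ ∑ m', |H₀ m'| :=
      Finset.single_le_sum (fun i _ => abs_nonneg (H₀ i)) (Finset.mem_univ m)
    have h2 : -H₀ m ≤ |H₀ m| := neg_le_abs _
    show 0 ≤ H₀ m + ∑ m', |H₀ m'|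
    linarith
  · intro m
    have hH₀m := congrFun hH₀ m
    simp only [Matrix.mulVecLin_apply, hA, Matrix.sub_mulVec, Matrix.one_mulVec,
      Pi.sub_apply] at hH₀m
    -- hH₀m : H₀ m - (P.mulVec H₀) m = g m
    have hPH : (P.mulVec H₀) m = ∑ m', P m m' * H₀ m' := by
      simp [Matrix.mulVec, dotProduct]
    have hexp : ∑ m', P m m' * ((H₀ m' + ∑ m'', |H₀ m''|) - (H₀ m + ∑ m'', |H₀ m''|))
        = (∑ m', P m m' * H₀ m') - H₀ m := by
      have : ∀ m', P m m' * ((H₀ m' + ∑ m'', |H₀ m''|) - (H₀ m + ∑ m'', |H₀ m''|))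
          = P m m' * H₀ m' - P m m' * H₀ m := fun m' => by ring
      rw [Finset.sum_congr rfl fun i _ => this i, Finset.sum_sub_distrib,
        ← Finset.sum_mul, hP1 m, one_mul]
    rw [hexp]
    have : g m = r - f m := rfl
    have hfm : f m = ∑ m', P m m' * R m' m := rfl
    rw [hPH, this, hfm] at hH₀m
    linarith
end

section
/- Let P₁ and P₂ be two row-stochastic matrices on a finite state space 𝕐 that agree on all rows except possibly row y₀, with P₁ and P₂ having stationary distributions π₁ and π₂ respectively, both with π₁(y₀) > 0 and π₂(y₀) > 0. For α ∈ (0,1), set γ := α π₂(y₀) / (α π₂(y₀) + (1−α) π₁(y₀)), and let P' be the matrix equal to P₁ (and P₂) off row y₀, with row y₀ equal to (1−γ)·(row y₀ of P₁) + γ·(row y₀ of P₂). Assume additionally that π₂(y) > 0 implies row y of P₁ equals row y of P₂ for all y ≠ y₀. Then π' := (1−α) π₁ + α π₂ is a stationary distribution of P'. -/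
open Matrix Finset

/-- **Splitting of stationary distributions under row mixing.**
Let `P₁, P₂` be row-stochastic matrices on a finite set `Y` agreeing on all
rows except possibly `y₀`, with stationary probability vectors `π₁, π₂`, both
positive at `y₀`, and suppose that whenever `π₂ y > 0` for `y ≠ y₀` the rows
of `P₁` and `P₂` at `y` agree.  For `α ∈ (0,1)` and
`γ = α π₂(y₀) / (α π₂(y₀) + (1−α) π₁(y₀))`, let `P'` agree with `P₁` off
`y₀` and have the `γ`-mixed row at `y₀`.  Then `(1−α) π₁ + α π₂` is a
stationary distribution of `P'`. -/
theorem stmt15 {Y : Type*} [Fintype Y] [DecidableEq Y]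
    (P₁ P₂ P' : Matrix Y Y ℝ)
    (hP₁0 : ∀ i j, 0 ≤ P₁ i j) (hP₁1 : ∀ i, ∑ j, P₁ i j = 1)
    (hP₂0 : ∀ i j, 0 ≤ P₂ i j) (hP₂1 : ∀ i, ∑ j, P₂ i j = 1)
    (y₀ : Y)
    (hagree : ∀ y, y ≠ y₀ → P₁ y = P₂ y)
    (π₁ π₂ : Y → ℝ)
    (hπ₁0 : ∀ y, 0 ≤ π₁ y) (hπ₁1 : ∑ y, π₁ y = 1) (hπ₁stat : π₁ ᵥ* P₁ = π₁)
    (hπ₂0 : ∀ y, 0 ≤ π₂ y) (hπ₂1 : ∑ y, π₂ y = 1) (hπ₂stat : π₂ ᵥ* P₂ = π₂)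
    (hπ₁pos : 0 < π₁ y₀) (hπ₂pos : 0 < π₂ y₀)
    (hsupp : ∀ y, y ≠ y₀ → 0 < π₂ y → P₁ y = P₂ y)
    (α γ : ℝ) (hα : α ∈ Set.Ioo (0 : ℝ) 1)
    (hγ : γ = α * π₂ y₀ / (α * π₂ y₀ + (1 - α) * π₁ y₀))
    (hP'off : ∀ y, y ≠ y₀ → P' y = P₁ y)
    (hP'y₀ : ∀ z, P' y₀ z = (1 - γ) * P₁ y₀ z + γ * P₂ y₀ z) :
    ((fun y => (1 - α) * π₁ y + α * π₂ y) ᵥ* P'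
        = fun y => (1 - α) * π₁ y + α * π₂ y) ∧
    (∀ y, 0 ≤ (1 - α) * π₁ y + α * π₂ y) ∧
    (∑ y, ((1 - α) * π₁ y + α * π₂ y) = 1) := by
  obtain ⟨hα0, hα1⟩ := hα
  have hDpos : 0 < α * π₂ y₀ + (1 - α) * π₁ y₀ :=
    add_pos (mul_pos hα0 hπ₂pos) (mul_pos (by linarith) hπ₁pos)
  have hγ1 : γ * (α * π₂ y₀ + (1 - α) * π₁ y₀) = α * π₂ y₀ := by
    rw [hγ]; field_simp
  have hγ2 : (1 - γ) * (α * π₂ y₀ + (1 - α) * π₁ y₀) = (1 - α) * π₁ y₀ := by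
    rw [hγ]; field_simp; ring
  refine ⟨?_, ?_, ?_⟩
  · funext z
    have h1 : ∑ y, π₁ y * P₁ y z = π₁ z := by
      simpa [vecMul, dotProduct] using congrFun hπ₁stat z
    have h2 : ∑ y, π₂ y * P₂ y z = π₂ z := by
      simpa [vecMul, dotProduct] using congrFun hπ₂stat z
    have key : ∀ y, ((1 - α) * π₁ y + α * π₂ y) * P' y z
        = (1 - α) * (π₁ y * P₁ y z) + α * (π₂ y * P₂ y z) := by
      intro y
      by_cases h : y = y₀
      · rw [h, hP'y₀ z]
        linear_combination (P₁ y₀ z) * hγ2 + (P₂ y₀ z) * hγ1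
      · have hc := congrFun (hagree y h) z
        rw [hP'off y h]
        rw [show P₁ y z = P₂ y z from hc] at *
        ring
    show ∑ y, ((1 - α) * π₁ y + α * π₂ y) * P' y z
        = (1 - α) * π₁ z + α * π₂ z
    rw [Finset.sum_congr rfl (fun y _ => key y), Finset.sum_add_distrib,
      ← Finset.mul_sum, ← Finset.mul_sum, h1, h2]
  · intro y
    exact add_nonneg (mul_nonneg (by linarith) (hπ₁0 y))
      (mul_nonneg (by linarith) (hπ₂0 y))
  · rw [Finset.sum_add_distrib, ← Finset.mul_sum, ← Finset.mul_sum, hπ₁1, hπ₂1]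
    ring
end

section
/- Under the hypotheses of the previous statement (stationary distribution splitting), for any reward functions u, v : 𝕐 → ℝ where u(y) is computed with the mixed row weight at y₀, the mixed-policy averages also split: Σ_y π'(y) φ'(y) μ(y) = (1−α) Σ_y π₁(y) φ₁(y) μ(y) + α Σ_y π₂(y) φ₂(y) μ(y), where φ' equals φ₁ = φ₂ off y₀ (on the relevant supports) and φ'(y₀) = γ as defined; similarly Σ_y π'(y) φ'(y) = (1−α) Σ_y π₁(y) φ₁(y) + α Σ_y π₂(y) φ₂(y). -/
open Matrix Finset

/-- **Splitting of service and utilization rates under policy mixing.**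
In the setting of the stationary-distribution splitting lemma (two kernels
`P₁, P₂` induced by policies `φ₁, φ₂` differing only at `y₀`, stationary
distributions `π₁, π₂` positive at `y₀`, mixing weight
`γ = α π₂(y₀) / (α π₂(y₀) + (1−α) π₁(y₀))`, mixed policy `φ'` equal to
`φ₁ = φ₂` off `y₀` on the relevant supports and `φ'(y₀) = γ`, where at `y₀`
the two policies take the extreme values `φ₁(y₀) = 0`, `φ₂(y₀) = 1`), the
mixed averages split affinely:
`Σ π' φ' μ = (1−α) Σ π₁ φ₁ μ + α Σ π₂ φ₂ μ` and
`Σ π' φ' = (1−α) Σ π₁ φ₁ + α Σ π₂ φ₂`. -/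
theorem stmt16 {Y : Type*} [Fintype Y] [DecidableEq Y]
    (P₁ P₂ P' : Matrix Y Y ℝ)
    (hP₁0 : ∀ i j, 0 ≤ P₁ i j) (hP₁1 : ∀ i, ∑ j, P₁ i j = 1)
    (hP₂0 : ∀ i j, 0 ≤ P₂ i j) (hP₂1 : ∀ i, ∑ j, P₂ i j = 1)
    (y₀ : Y)
    (hagree : ∀ y, y ≠ y₀ → P₁ y = P₂ y)
    (π₁ π₂ : Y → ℝ)
    (hπ₁0 : ∀ y, 0 ≤ π₁ y) (hπ₁1 : ∑ y, π₁ y = 1) (hπ₁stat : π₁ ᵥ* P₁ = π₁)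
    (hπ₂0 : ∀ y, 0 ≤ π₂ y) (hπ₂1 : ∑ y, π₂ y = 1) (hπ₂stat : π₂ ᵥ* P₂ = π₂)
    (hπ₁pos : 0 < π₁ y₀) (hπ₂pos : 0 < π₂ y₀)
    (α γ : ℝ) (hα : α ∈ Set.Ioo (0 : ℝ) 1)
    (hγ : γ = α * π₂ y₀ / (α * π₂ y₀ + (1 - α) * π₁ y₀))
    (hP'off : ∀ y, y ≠ y₀ → P' y = P₁ y)
    (hP'y₀ : ∀ z, P' y₀ z = (1 - γ) * P₁ y₀ z + γ * P₂ y₀ z)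
    (φ₁ φ₂ φ' : Y → ℝ) (μ : Y → ℝ)
    (hφ₁ : ∀ y, φ₁ y ∈ Set.Icc (0 : ℝ) 1) (hφ₂ : ∀ y, φ₂ y ∈ Set.Icc (0 : ℝ) 1)
    (hφoff : ∀ y, y ≠ y₀ → φ' y = φ₁ y)
    (hφsupp : ∀ y, y ≠ y₀ → 0 < π₂ y → φ₁ y = φ₂ y)
    (hφ'y₀ : φ' y₀ = γ) (hφ₁y₀ : φ₁ y₀ = 0) (hφ₂y₀ : φ₂ y₀ = 1) :
    (∑ y, ((1 - α) * π₁ y + α * π₂ y) * φ' y * μ y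
        = (1 - α) * ∑ y, π₁ y * φ₁ y * μ y
          + α * ∑ y, π₂ y * φ₂ y * μ y) ∧
    (∑ y, ((1 - α) * π₁ y + α * π₂ y) * φ' y
        = (1 - α) * ∑ y, π₁ y * φ₁ y
          + α * ∑ y, π₂ y * φ₂ y) := by
  have key : ∀ y, ((1 - α) * π₁ y + α * π₂ y) * φ' y
      = (1 - α) * (π₁ y * φ₁ y) + α * (π₂ y * φ₂ y) := by
    intro y
    by_cases hy : y = y₀
    · rw [hy, hφ'y₀, hφ₁y₀, hφ₂y₀, hγ]
      have hden : α * π₂ y₀ + (1 - α) * π₁ y₀ ≠ 0 := by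
        have h1 := mul_pos hα.1 hπ₂pos
        have h2 := mul_pos (by linarith [hα.2] : (0:ℝ) < 1 - α) hπ₁pos
        linarith
      field_simp
      ring
    · rw [hφoff y hy]
      rcases lt_or_eq_of_le (hπ₂0 y) with h | h
      · rw [hφsupp y hy h]; ring
      · rw [← h]; ring
  constructor
  · rw [Finset.mul_sum, Finset.mul_sum, ← Finset.sum_add_distrib]
    refine Finset.sum_congr rfl fun y _ => ?_
    rw [key y]; ring
  · rw [Finset.mul_sum, Finset.mul_sum, ← Finset.sum_add_distrib]
    refine Finset.sum_congr rfl fun y _ => ?_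
    rw [key y]
end
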